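/- (Pointwise Operator Equivalence, core of the Operator Equivalence Theorem.) Let n ≥ 1, μ ∈ ℝⁿ, Σ a symmetric positive definite real n×n matrix, and let p : ℝⁿ → ℝ be the associated Gaussian density. Let h : ℝⁿ → ℝⁿ be continuously differentiable and M : ℝⁿ → ℝ^{n×n} twice continuously differentiable with M(x) symmetric for every x. Then for every x ∈ ℝⁿ, the adjoint expression (A*p)(x) := −Σᵢ ∂/∂xᵢ[p(x) hᵢ(x)] + (1/2) Σᵢⱼ ∂²/∂xᵢ∂xⱼ[p(x) Mᵢⱼ(x)] equals p(x) · c(x), where the 𝒴-coefficient c(x) is defined by c(x) = (Σ⁻¹(x − μ))ᵀ h(x) − Σᵢ ∂hᵢ/∂xᵢ(x) + (1/2) Σᵢⱼ [ (−Σ⁻¹ + Σ⁻¹ (x − μ)(x − μ)ᵀ (Σ⁻¹)ᵀ)ᵢⱼ · Mᵢⱼ(x) + ∂²Mᵢⱼ/∂xᵢ∂xⱼ(x) ] − Σᵢⱼ ∂Mᵢⱼ/∂xᵢ(x) · (Σ⁻¹(x − μ))ⱼ. -/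

import Mathlib

open Matrix

/-- Partial derivative of `f : ℝⁿ → ℝ` in the `i`-th coordinate direction. -/
noncomputable def pd {n : ℕ} (i : Fin n) (f : (Fin n → ℝ) → ℝ) (x : Fin n → ℝ) : ℝ :=
  fderiv ℝ f x (Pi.single i 1)

/-- Gaussian density with mean `μ` and covariance matrix `S`. -/
noncomputable def gaussianPdf {n : ℕ} (μ : Fin n → ℝ) (S : Matrix (Fin n) (Fin n) ℝ)
    (x : Fin n → ℝ) : ℝ :=
  (2 * Real.pi) ^ (-(n : ℝ) / 2) * S.det ^ (-(1 : ℝ) / 2) *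
    Real.exp (-(1 / 2) * ((x - μ) ⬝ᵥ S⁻¹.mulVec (x - μ)))

/-- The scalar `𝒴`-coefficient built from drift `h`, diffusion matrix `M`, and the
Gaussian parameters `μ`, `S`. -/
noncomputable def yCoeff {n : ℕ} (μ : Fin n → ℝ) (S : Matrix (Fin n) (Fin n) ℝ)
    (h : (Fin n → ℝ) → Fin n → ℝ) (M : (Fin n → ℝ) → Matrix (Fin n) (Fin n) ℝ)
    (x : Fin n → ℝ) : ℝ :=
  (S⁻¹.mulVec (x - μ)) ⬝ᵥ h x - (∑ i, pd i (fun y => h y i) x)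
    + (1 / 2) * ∑ i, ∑ j,
        ((-S⁻¹ + S⁻¹ * vecMulVec (x - μ) (x - μ) * (S⁻¹)ᵀ) i j * M x i j
          + pd i (fun y => pd j (fun z => M z i j) y) x)
    - ∑ i, ∑ j, pd i (fun y => M y i j) x * (S⁻¹.mulVec (x - μ)) j

noncomputable def dotCLM {n : ℕ} (w : Fin n → ℝ) : (Fin n → ℝ) →L[ℝ] ℝ :=
  ∑ k, w k • (ContinuousLinearMap.proj k : (Fin n → ℝ) →L[ℝ] ℝ)

@[simp] lemma dotCLM_apply {n : ℕ} (w v : Fin n → ℝ) : dotCLM w v = w ⬝ᵥ v := by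
  simp [dotCLM, dotProduct]

lemma hasFDerivAt_coord {n : ℕ} (k : Fin n) (c : ℝ) (x : Fin n → ℝ) :
    HasFDerivAt (fun y : Fin n → ℝ => y k - c)
      (ContinuousLinearMap.proj k : (Fin n → ℝ) →L[ℝ] ℝ) x := by
  simpa using ((ContinuousLinearMap.proj k : (Fin n → ℝ) →L[ℝ] ℝ)).hasFDerivAt.sub_const c

lemma hasFDerivAt_quad {n : ℕ} (A : Matrix (Fin n) (Fin n) ℝ) (hA : Aᵀ = A)
    (μ x : Fin n → ℝ) :
    HasFDerivAt (fun y => (y - μ) ⬝ᵥ A.mulVec (y - μ))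
      (dotCLM ((2 : ℝ) • A.mulVec (x - μ))) x := by
  have hA' : ∀ k l, A l k = A k l := fun k l => by
    conv_lhs => rw [← hA, Matrix.transpose_apply]
  have key : (fun y : Fin n → ℝ => (y - μ) ⬝ᵥ A.mulVec (y - μ))
      = fun y => ∑ k, ∑ l, A k l * ((y k - μ k) * (y l - μ l)) := by
    funext y
    simp only [dotProduct, mulVec, Pi.sub_apply, Finset.mul_sum]
    exact Finset.sum_congr rfl fun k _ => Finset.sum_congr rfl fun l _ => by ring
  rw [key]
  have hterm : ∀ k l : Fin n,
      HasFDerivAt (fun y : Fin n → ℝ => A k l * ((y k - μ k) * (y l - μ l)))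
        (A k l • ((x k - μ k) • (ContinuousLinearMap.proj l : (Fin n → ℝ) →L[ℝ] ℝ)
          + (x l - μ l) • (ContinuousLinearMap.proj k : (Fin n → ℝ) →L[ℝ] ℝ))) x :=
    fun k l => ((hasFDerivAt_coord k (μ k) x).mul (hasFDerivAt_coord l (μ l) x)).const_mul _
  have hsum := HasFDerivAt.fun_sum (fun k (_ : k ∈ Finset.univ) =>
    HasFDerivAt.fun_sum (fun l (_ : l ∈ Finset.univ) => hterm k l))
  refine hsum.congr_fderiv ?_
  apply ContinuousLinearMap.ext; intro v
  simp only [dotCLM_apply, ContinuousLinearMap.coe_sum', Finset.sum_apply,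
    ContinuousLinearMap.coe_smul', Pi.smul_apply, ContinuousLinearMap.add_apply,
    ContinuousLinearMap.proj_apply, smul_eq_mul, smul_dotProduct,
    dotProduct, Pi.sub_apply, mulVec]
  have h1 : ∀ k l : Fin n, A k l * ((x k - μ k) * v l + (x l - μ l) * v k)
      = A k l * ((x k - μ k) * v l) + A k l * ((x l - μ l) * v k) := fun k l => by ring
  have h2 : ∑ k, ∑ l, A k l * ((x k - μ k) * v l)
      = ∑ k, ∑ l, A k l * ((x l - μ l) * v k) := by
    rw [Finset.sum_comm]
    exact Finset.sum_congr rfl fun k _ => Finset.sum_congr rfl fun l _ => by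
      rw [hA' k l]
  have h3 : ∀ k : Fin n, (2 * ∑ l, A k l * (x l - μ l)) * v k
      = ∑ l, A k l * ((x l - μ l) * v k) + ∑ l, A k l * ((x l - μ l) * v k) := by
    intro k
    rw [two_mul, add_mul, Finset.sum_mul]
    congr 1 <;> exact Finset.sum_congr rfl fun l _ => by ring
  simp_rw [h1, h3, Finset.sum_add_distrib, h2]

lemma hasFDerivAt_gaussianPdf {n : ℕ} (μ : Fin n → ℝ) (S : Matrix (Fin n) (Fin n) ℝ)
    (hA : (S⁻¹)ᵀ = S⁻¹) (x : Fin n → ℝ) :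
    HasFDerivAt (gaussianPdf μ S)
      ((gaussianPdf μ S x) • dotCLM (-(S⁻¹.mulVec (x - μ)))) x := by
  have hq := hasFDerivAt_quad S⁻¹ hA μ x
  have h1 := hq.const_mul (-(1/2 : ℝ))
  have h2 := h1.exp
  have h3 := h2.const_mul ((2 * Real.pi) ^ (-(n : ℝ) / 2) * S.det ^ (-(1 : ℝ) / 2))
  unfold gaussianPdf
  refine h3.congr_fderiv ?_
  apply ContinuousLinearMap.ext; intro v
  simp only [ContinuousLinearMap.coe_smul', Pi.smul_apply, dotCLM_apply, smul_eq_mul,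
    neg_dotProduct, smul_dotProduct]
  ring

lemma differentiableAt_gaussianPdf {n : ℕ} (μ : Fin n → ℝ) (S : Matrix (Fin n) (Fin n) ℝ)
    (hA : (S⁻¹)ᵀ = S⁻¹) (x : Fin n → ℝ) :
    DifferentiableAt ℝ (gaussianPdf μ S) x :=
  (hasFDerivAt_gaussianPdf μ S hA x).differentiableAt

lemma pd_gaussianPdf {n : ℕ} (μ : Fin n → ℝ) (S : Matrix (Fin n) (Fin n) ℝ)
    (hA : (S⁻¹)ᵀ = S⁻¹) (i : Fin n) (x : Fin n → ℝ) :
    pd i (gaussianPdf μ S) x = -(S⁻¹.mulVec (x - μ) i) * gaussianPdf μ S x := by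
  rw [pd, (hasFDerivAt_gaussianPdf μ S hA x).fderiv]
  simp only [ContinuousLinearMap.coe_smul', Pi.smul_apply, dotCLM_apply, smul_eq_mul,
    dotProduct_single, Pi.neg_apply, mul_one]
  ring

lemma pd_mul {n : ℕ} (i : Fin n) {f g : (Fin n → ℝ) → ℝ} {x : Fin n → ℝ}
    (hf : DifferentiableAt ℝ f x) (hg : DifferentiableAt ℝ g x) :
    pd i (fun y => f y * g y) x = pd i f x * g x + f x * pd i g x := by
  unfold pd
  rw [fderiv_fun_mul hf hg]
  simp only [ContinuousLinearMap.add_apply, ContinuousLinearMap.coe_smul', Pi.smul_apply,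
    smul_eq_mul]
  ring

lemma pd_sub {n : ℕ} (i : Fin n) {f g : (Fin n → ℝ) → ℝ} {x : Fin n → ℝ}
    (hf : DifferentiableAt ℝ f x) (hg : DifferentiableAt ℝ g x) :
    pd i (fun y => f y - g y) x = pd i f x - pd i g x := by
  unfold pd
  rw [fderiv_fun_sub hf hg]
  simp

lemma hasFDerivAt_mulVec_entry {n : ℕ} (A : Matrix (Fin n) (Fin n) ℝ) (μ x : Fin n → ℝ)
    (j : Fin n) :
    HasFDerivAt (fun y : Fin n → ℝ => A.mulVec (y - μ) j) (dotCLM (A j)) x := by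
  have key : (fun y : Fin n → ℝ => A.mulVec (y - μ) j)
      = fun y => ∑ l, A j l * (y l - μ l) := by
    funext y
    simp [mulVec, dotProduct]
  rw [key]
  have hsum := HasFDerivAt.fun_sum (fun l (_ : l ∈ Finset.univ) =>
    (hasFDerivAt_coord l (μ l) x).const_mul (A j l))
  exact hsum

lemma pd_mulVec_entry {n : ℕ} (A : Matrix (Fin n) (Fin n) ℝ) (μ x : Fin n → ℝ)
    (i j : Fin n) :
    pd i (fun y : Fin n → ℝ => A.mulVec (y - μ) j) x = A j i := by
  rw [pd, (hasFDerivAt_mulVec_entry A μ x j).fderiv]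
  simp

lemma contDiff_pd {n : ℕ} (j : Fin n) {f : (Fin n → ℝ) → ℝ} (hf : ContDiff ℝ 2 f) :
    ContDiff ℝ 1 (fun y => pd j f y) := by
  unfold pd
  exact (hf.fderiv_right (by norm_num)).clm_apply contDiff_const

lemma coeffMatrix_apply {n : ℕ} (A : Matrix (Fin n) (Fin n) ℝ) (v : Fin n → ℝ)
    (i j : Fin n) :
    (-A + A * vecMulVec v v * Aᵀ) i j = A.mulVec v i * A.mulVec v j - A i j := by
  have h : (A * vecMulVec v v * Aᵀ) i j = A.mulVec v i * A.mulVec v j := by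
    simp only [Matrix.mul_apply, vecMulVec_apply, Matrix.transpose_apply, mulVec, dotProduct]
    rw [Finset.sum_mul_sum]
    simp_rw [Finset.sum_mul]
    rw [Finset.sum_comm]
    exact Finset.sum_congr rfl fun k _ => Finset.sum_congr rfl fun l _ => by ring
  simp only [Matrix.add_apply, Matrix.neg_apply, h]
  ring


/-- Pointwise operator equivalence: for the Gaussian density `p`, the adjoint expression
`(A*p)(x)` equals `p(x) · c(x)` with `c` the explicit `𝒴`-coefficient. -/
theorem adjoint_eq_gaussianPdf_mul_yCoeff (n : ℕ) (hn : 1 ≤ n) (μ : Fin n → ℝ)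
    (S : Matrix (Fin n) (Fin n) ℝ) (hS : S.PosDef) (hSsymm : S.IsSymm)
    (h : (Fin n → ℝ) → Fin n → ℝ) (hh : ∀ i, ContDiff ℝ 1 fun y => h y i)
    (M : (Fin n → ℝ) → Matrix (Fin n) (Fin n) ℝ)
    (hM : ∀ i j, ContDiff ℝ 2 fun y => M y i j)
    (hMsymm : ∀ x, (M x).IsSymm) (x : Fin n → ℝ) :
    (-∑ i, pd i (fun y => gaussianPdf μ S y * h y i) x)
      + (1 / 2) * ∑ i, ∑ j,
          pd i (fun y => pd j (fun z => gaussianPdf μ S z * M z i j) y) x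
    = gaussianPdf μ S x * yCoeff μ S h M x := by

  have hA : (S⁻¹)ᵀ = S⁻¹ := by
    rw [Matrix.transpose_nonsing_inv, hSsymm.eq]
  have hA' : ∀ i j, S⁻¹ j i = S⁻¹ i j := fun i j => by
    conv_lhs => rw [← hA, Matrix.transpose_apply]
  have hMsymm' : ∀ i j, (fun z => M z j i) = fun z => M z i j := fun i j =>
    funext fun z => by conv_lhs => rw [← (hMsymm z).eq, Matrix.transpose_apply]
  have hpdiff : ∀ y, DifferentiableAt ℝ (gaussianPdf μ S) y :=
    differentiableAt_gaussianPdf μ S hA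
  have hpdp : ∀ (j : Fin n) y, pd j (gaussianPdf μ S) y
      = -(S⁻¹.mulVec (y - μ) j) * gaussianPdf μ S y := fun j y => pd_gaussianPdf μ S hA j y
  have hgdiff : ∀ (j : Fin n) y, DifferentiableAt ℝ (fun z : Fin n → ℝ => S⁻¹.mulVec (z - μ) j) y :=
    fun j y => (hasFDerivAt_mulVec_entry S⁻¹ μ y j).differentiableAt
  have hMdiff : ∀ (i j : Fin n) y, DifferentiableAt ℝ (fun z => M z i j) y :=
    fun i j y => ((hM i j).differentiable (by norm_num)).differentiableAt
  have hhdiff : ∀ (i : Fin n) y, DifferentiableAt ℝ (fun z => h z i) y :=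
    fun i y => ((hh i).differentiable one_ne_zero).differentiableAt
  have hpdMdiff : ∀ (i j : Fin n) y, DifferentiableAt ℝ (fun z => pd j (fun w => M w i j) z) y :=
    fun i j y => ((contDiff_pd j (hM i j)).differentiable one_ne_zero).differentiableAt
  -- Step 1: first-order term
  have e1 : ∀ i, pd i (fun y => gaussianPdf μ S y * h y i) x
      = gaussianPdf μ S x *
        (pd i (fun y => h y i) x - S⁻¹.mulVec (x - μ) i * h x i) := by
    intro i
    rw [pd_mul i (hpdiff x) (hhdiff i x), hpdp i x]
    ring
  -- Step 2: inner derivative, as a function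
  have e2 : ∀ i j : Fin n, (fun y => pd j (fun z => gaussianPdf μ S z * M z i j) y)
      = fun y => gaussianPdf μ S y *
          (pd j (fun z => M z i j) y - S⁻¹.mulVec (y - μ) j * M y i j) := by
    intro i j
    funext y
    rw [pd_mul j (hpdiff y) (hMdiff i j y), hpdp j y]
    ring
  -- Step 3: second-order term
  have e3 : ∀ i j : Fin n,
      pd i (fun y => pd j (fun z => gaussianPdf μ S z * M z i j) y) x
      = gaussianPdf μ S x *
        (pd i (fun y => pd j (fun z => M z i j) y) x
          - (S⁻¹ j i * M x i j + S⁻¹.mulVec (x - μ) j * pd i (fun z => M z i j) x)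
          - S⁻¹.mulVec (x - μ) i *
            (pd j (fun z => M z i j) x - S⁻¹.mulVec (x - μ) j * M x i j)) := by
    intro i j
    rw [e2 i j]
    have hGM : DifferentiableAt ℝ (fun y : Fin n → ℝ => S⁻¹.mulVec (y - μ) j * M y i j) x :=
      (hgdiff j x).mul (hMdiff i j x)
    have hF : DifferentiableAt ℝ
        (fun y => pd j (fun z => M z i j) y - S⁻¹.mulVec (y - μ) j * M y i j) x :=
      (hpdMdiff i j x).sub hGM
    rw [pd_mul i (hpdiff x) hF, hpdp i x,
      pd_sub i (hpdMdiff i j x) hGM,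
      pd_mul i (hgdiff j x) (hMdiff i j x),
      pd_mulVec_entry S⁻¹ μ x i j]
    ring
  -- Step 4: algebraic identity for the coefficient
  have hsuff : yCoeff μ S h M x
      = -(∑ i, (pd i (fun y => h y i) x - S⁻¹.mulVec (x - μ) i * h x i))
        + (1 / 2) * ∑ i, ∑ j,
          (pd i (fun y => pd j (fun z => M z i j) y) x
            - (S⁻¹ j i * M x i j + S⁻¹.mulVec (x - μ) j * pd i (fun z => M z i j) x)
            - S⁻¹.mulVec (x - μ) i *
              (pd j (fun z => M z i j) x - S⁻¹.mulVec (x - μ) j * M x i j)) := by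
    unfold yCoeff
    have swapId : ∑ i, ∑ j, S⁻¹.mulVec (x - μ) i * pd j (fun z => M z i j) x
        = ∑ i, ∑ j, S⁻¹.mulVec (x - μ) j * pd i (fun z => M z i j) x := by
      rw [Finset.sum_comm]
      exact Finset.sum_congr rfl fun i _ => Finset.sum_congr rfl fun j _ => by
        rw [hMsymm' i j]
    have per : ∀ i j : Fin n,
        (pd i (fun y => pd j (fun z => M z i j) y) x
          - (S⁻¹ j i * M x i j + S⁻¹.mulVec (x - μ) j * pd i (fun z => M z i j) x)
          - S⁻¹.mulVec (x - μ) i *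
            (pd j (fun z => M z i j) x - S⁻¹.mulVec (x - μ) j * M x i j))
        = (((-S⁻¹ + S⁻¹ * vecMulVec (x - μ) (x - μ) * (S⁻¹)ᵀ) i j * M x i j
              + pd i (fun y => pd j (fun z => M z i j) y) x)
            - S⁻¹.mulVec (x - μ) j * pd i (fun z => M z i j) x
            - S⁻¹.mulVec (x - μ) i * pd j (fun z => M z i j) x) := by
      intro i j
      rw [coeffMatrix_apply, hA' i j]
      ring
    simp only [per, Finset.sum_sub_distrib, dotProduct, Pi.sub_apply]
    rw [swapId]
    have hc : ∑ i, ∑ j, pd i (fun y => M y i j) x * S⁻¹.mulVec (x - μ) j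
        = ∑ i, ∑ j, S⁻¹.mulVec (x - μ) j * pd i (fun z => M z i j) x :=
      Finset.sum_congr rfl fun i _ => Finset.sum_congr rfl fun j _ => by ring
    rw [hc]
    ring
  rw [hsuff]
  simp only [e1, e3, ← Finset.mul_sum]
  ring
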